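/- Generalized Magnetization-Structure bound for the Curie–Weiss model: for every N ≥ 1, every finite nonempty set Σ, every weight function ξ : Σ → ℝ with ξ_τ > 0 for all τ, and every trial magnetization m̃ : Σ → ℝ, one has (1/N) ln Z_N(β) ≥ (1/N) ln [ (∑_{σ∈{-1,1}^N} ∑_{τ∈Σ} ξ_τ exp(βJN m(σ) m̃(τ))) / (∑_{τ∈Σ} ξ_τ exp((βJN/2) m̃(τ)²)) ], for all β > 0 and J > 0. -/
import Mathlib


open Real

/-- The value of a spin: `true ↦ 1`, `false ↦ -1`. -/
noncomputable def spin (b : Bool) : ℝ := if b then 1 else -1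

/-- The magnetization per spin of a configuration `σ ∈ {-1,1}^N`. -/
noncomputable def mag (N : ℕ) (σ : Fin N → Bool) : ℝ := (1 / (N : ℝ)) * ∑ i, spin (σ i)

/-- The Curie–Weiss partition function `Z_N(β) = ∑_σ exp((βJN/2) m(σ)²)`. -/
noncomputable def Zcw (N : ℕ) (J β : ℝ) : ℝ :=
  ∑ σ : Fin N → Bool, Real.exp (β * J * (N : ℝ) / 2 * (mag N σ) ^ 2)

/-- Generalized Magnetization-Structure bound for the Curie–Weiss model: for every `N ≥ 1`,
every Magnetization Structure `(Σ, ξ, m̃)` (a finite nonempty set `Σ`, strictly positive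
weights `ξ`, and a trial magnetization `m̃ : Σ → ℝ`), all `β > 0` and `J > 0`:
`(1/N) ln Z_N(β) ≥ (1/N) ln [ (∑_σ ∑_τ ξ_τ exp(βJN m(σ) m̃(τ))) /
(∑_τ ξ_τ exp((βJN/2) m̃(τ)²)) ]`. -/
theorem cw_mast_bound (N : ℕ) (hN : 1 ≤ N) (β J : ℝ) (hβ : 0 < β) (hJ : 0 < J)
    (S : Type) [Fintype S] [Nonempty S] (ξ : S → ℝ) (hξ : ∀ τ, 0 < ξ τ) (mt : S → ℝ) :
    (1 / (N : ℝ)) * Real.log (Zcw N J β) ≥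
      (1 / (N : ℝ)) * Real.log
        ((∑ σ : Fin N → Bool, ∑ τ : S, ξ τ * Real.exp (β * J * (N : ℝ) * mag N σ * mt τ)) /
          (∑ τ : S, ξ τ * Real.exp (β * J * (N : ℝ) / 2 * (mt τ) ^ 2))) := by
  set Num := ∑ σ : Fin N → Bool, ∑ τ : S, ξ τ * Real.exp (β * J * (N : ℝ) * mag N σ * mt τ)
    with hNumdef
  set D := ∑ τ : S, ξ τ * Real.exp (β * J * (N : ℝ) / 2 * (mt τ) ^ 2) with hDdef
  have hNpos : (0:ℝ) < N := by exact_mod_cast Nat.lt_of_lt_of_le Nat.zero_lt_one hN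
  have hc : 0 < β * J * (N : ℝ) := by positivity
  have hD : 0 < D := Finset.sum_pos (fun τ _ => mul_pos (hξ τ) (Real.exp_pos _)) Finset.univ_nonempty
  have hNum : 0 < Num := Finset.sum_pos
    (fun σ _ => Finset.sum_pos (fun τ _ => mul_pos (hξ τ) (Real.exp_pos _)) Finset.univ_nonempty)
    Finset.univ_nonempty
  have hZ : 0 < Zcw N J β := Finset.sum_pos (fun σ _ => Real.exp_pos _) Finset.univ_nonempty
  have key : Num ≤ Zcw N J β * D := by
    rw [Zcw, Finset.sum_mul]
    refine Finset.sum_le_sum fun σ _ => ?_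
    rw [Finset.mul_sum]
    refine Finset.sum_le_sum fun τ _ => ?_
    have h1 : β * J * (N : ℝ) * mag N σ * mt τ ≤
        β * J * (N : ℝ) / 2 * (mag N σ) ^ 2 + β * J * (N : ℝ) / 2 * (mt τ) ^ 2 := by
      have hsq : (0:ℝ) ≤ (mag N σ - mt τ)^2 := sq_nonneg _
      nlinarith [hc, sq_nonneg (mag N σ - mt τ)]
    calc ξ τ * Real.exp (β * J * (N : ℝ) * mag N σ * mt τ)
        ≤ ξ τ * Real.exp (β * J * (N : ℝ) / 2 * (mag N σ) ^ 2 +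
            β * J * (N : ℝ) / 2 * (mt τ) ^ 2) := by
          exact mul_le_mul_of_nonneg_left (Real.exp_le_exp.2 h1) (hξ τ).le
      _ = Real.exp (β * J * (N : ℝ) / 2 * (mag N σ) ^ 2) *
            (ξ τ * Real.exp (β * J * (N : ℝ) / 2 * (mt τ) ^ 2)) := by
          rw [Real.exp_add]; ring
  have hdiv : Num / D ≤ Zcw N J β := (div_le_iff₀ hD).2 key
  have hlog : Real.log (Num / D) ≤ Real.log (Zcw N J β) :=
    Real.log_le_log (div_pos hNum hD) hdiv
  exact mul_le_mul_of_nonneg_left hlog (one_div_nonneg.mpr hNpos.le)
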